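/- Fix t > 0. The map μ ↦ E₂(μ,t) is differentiable on ℝ and its derivative at every μ equals the conditional variance Var₂(μ,t) = M₂(μ,t) − E₂(μ,t)²; in particular this derivative is nonnegative, so μ ↦ E₂(μ,t) is monotone nondecreasing. (Lemma 2 of the paper, case i = 2.) -/

import Mathlib

open MeasureTheory

/-- Standard Gaussian density `φ(x) = (2π)^{-1/2} exp(-x²/2)`. -/
noncomputable def gpdf (x : ℝ) : ℝ := (Real.sqrt (2 * Real.pi))⁻¹ * Real.exp (-x ^ 2 / 2)

/-- Standard Gaussian CDF `Φ(x)`. -/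
noncomputable def gcdf (x : ℝ) : ℝ := ∫ t in Set.Iic x, gpdf t

/-- Normalizing constant `Z₂(μ,t) = Φ(t-μ) - Φ(-t-μ)`. -/
noncomputable def Z2 (μ t : ℝ) : ℝ := gcdf (t - μ) - gcdf (-t - μ)

/-- Mean of `N(μ,1)` conditioned on the interval `[-t,t]`. -/
noncomputable def E2 (μ t : ℝ) : ℝ :=
  (Z2 μ t)⁻¹ * ∫ x in Set.Icc (-t) t, x * gpdf (x - μ)

/-- Second moment of `N(μ,1)` conditioned on the interval `[-t,t]`. -/
noncomputable def M2 (μ t : ℝ) : ℝ :=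
  (Z2 μ t)⁻¹ * ∫ x in Set.Icc (-t) t, x ^ 2 * gpdf (x - μ)

lemma gpdf_pos (x : ℝ) : 0 < gpdf x := by
  have h2 : (0:ℝ) < 2 * Real.pi := by positivity
  unfold gpdf
  positivity

lemma gpdf_continuous : Continuous gpdf := by
  unfold gpdf; fun_prop

lemma gpdf_integrable : Integrable gpdf := by
  have h : Integrable (fun x : ℝ => Real.exp (-(1/2) * x ^ 2)) :=
    integrable_exp_neg_mul_sq (by norm_num)
  have he : gpdf = fun x => (Real.sqrt (2 * Real.pi))⁻¹ * Real.exp (-(1/2) * x ^ 2) := by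
    funext x; unfold gpdf; ring_nf
  rw [he]
  exact h.const_mul _

lemma hasDerivAt_gpdf (x : ℝ) : HasDerivAt gpdf (-x * gpdf x) x := by
  have h1 : HasDerivAt (fun y : ℝ => -y ^ 2 / 2) (-x) x := by
    have := ((hasDerivAt_pow 2 x).neg).div_const 2
    exact this.congr_deriv (by ring)
  have h2 : HasDerivAt (fun y : ℝ => Real.exp (-y ^ 2 / 2))
      (Real.exp (-x ^ 2 / 2) * (-x)) x := (Real.hasDerivAt_exp _).comp x h1
  have h3 := h2.const_mul ((Real.sqrt (2 * Real.pi))⁻¹)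
  exact h3.congr_deriv (by unfold gpdf; ring)

lemma hasDerivAt_gcdf (x : ℝ) : HasDerivAt gcdf (gpdf x) x := by
  have key : gcdf = fun y => gcdf 0 + ∫ s in (0:ℝ)..y, gpdf s := by
    funext y
    have := intervalIntegral.integral_Iic_sub_Iic (μ := volume)
      (gpdf_integrable.integrableOn) (gpdf_integrable.integrableOn) (a := (0:ℝ)) (b := y)
    unfold gcdf
    linarith [this]
  rw [key]
  exact (intervalIntegral.integral_hasDerivAt_right
    (gpdf_continuous.intervalIntegrable _ _)
    (gpdf_continuous.stronglyMeasurableAtFilter _ _)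
    gpdf_continuous.continuousAt).const_add _

/-- Fundamental theorem of calculus for set integrals over `Icc`. -/
lemma integral_Icc_eq_sub (f F : ℝ → ℝ) {a b : ℝ} (hab : a ≤ b)
    (hF : ∀ x, HasDerivAt F (f x) x) (hf : Continuous f) :
    ∫ x in Set.Icc a b, f x = F b - F a := by
  rw [MeasureTheory.integral_Icc_eq_integral_Ioc, ← intervalIntegral.integral_of_le hab]
  exact intervalIntegral.integral_eq_sub_of_hasDerivAt (fun x _ => hF x)
    (hf.intervalIntegrable a b)

/-- Lemma 2 of the paper (case i = 2): for fixed `t > 0`, the interval-truncated Gaussian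
mean `μ ↦ E₂(μ,t)` is differentiable with derivative the conditional variance
`Var₂(μ,t) = M₂(μ,t) - E₂(μ,t)²`, which is nonnegative; hence `μ ↦ E₂(μ,t)` is
monotone nondecreasing. -/
theorem truncGaussInterval_mean_hasDerivAt_variance (t : ℝ) (ht : 0 < t) :
    (∀ μ : ℝ, HasDerivAt (fun m : ℝ => E2 m t) (M2 μ t - (E2 μ t) ^ 2) μ) ∧
    (∀ μ : ℝ, 0 ≤ M2 μ t - (E2 μ t) ^ 2) ∧
    Monotone (fun μ : ℝ => E2 μ t) := by
  have hle : (-t) ≤ t := by linarith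
  -- Z2 is positive
  have hZpos : ∀ μ : ℝ, 0 < Z2 μ t := by
    intro μ
    have hlt : (-t - μ) < (t - μ) := by linarith
    have : Z2 μ t = ∫ s in (-t - μ)..(t - μ), gpdf s := by
      unfold Z2 gcdf
      exact intervalIntegral.integral_Iic_sub_Iic (μ := volume)
        (gpdf_integrable.integrableOn) (gpdf_integrable.integrableOn)
    rw [this]
    exact intervalIntegral.intervalIntegral_pos_of_pos
      (gpdf_continuous.intervalIntegrable _ _) gpdf_pos hlt
  have hZne : ∀ μ : ℝ, Z2 μ t ≠ 0 := fun μ => (hZpos μ).ne'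
  -- closed forms
  have hNint : ∀ μ : ℝ, (∫ x in Set.Icc (-t) t, x * gpdf (x - μ)) =
      μ * Z2 μ t + (gpdf (-t - μ) - gpdf (t - μ)) := by
    intro μ
    have hF : ∀ x : ℝ, HasDerivAt (fun y => μ * gcdf (y - μ) - gpdf (y - μ))
        (x * gpdf (x - μ)) x := by
      intro x
      have hsub : HasDerivAt (fun y : ℝ => y - μ) 1 x := (hasDerivAt_id x).sub_const μ
      have h1 : HasDerivAt (fun y => gcdf (y - μ)) (gpdf (x - μ)) x := by
        exact ((hasDerivAt_gcdf (x - μ)).comp x hsub).congr_deriv (mul_one _)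
      have h2 : HasDerivAt (fun y => gpdf (y - μ)) (-(x - μ) * gpdf (x - μ)) x := by
        exact ((hasDerivAt_gpdf (x - μ)).comp x hsub).congr_deriv (mul_one _)
      have := (h1.const_mul μ).sub h2
      exact this.congr_deriv (by ring)
    have hf : Continuous (fun x : ℝ => x * gpdf (x - μ)) := by
      exact continuous_id.mul (gpdf_continuous.comp (by fun_prop))
    rw [integral_Icc_eq_sub _ _ hle hF hf]
    unfold Z2
    ring
  have hMint : ∀ μ : ℝ, (∫ x in Set.Icc (-t) t, x ^ 2 * gpdf (x - μ)) =
      (μ ^ 2 + 1) * Z2 μ t + ((μ - t) * gpdf (-t - μ) - (μ + t) * gpdf (t - μ)) := by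
    intro μ
    have hF : ∀ x : ℝ, HasDerivAt (fun y => (μ ^ 2 + 1) * gcdf (y - μ) - (y + μ) * gpdf (y - μ))
        (x ^ 2 * gpdf (x - μ)) x := by
      intro x
      have hsub : HasDerivAt (fun y : ℝ => y - μ) 1 x := (hasDerivAt_id x).sub_const μ
      have h1 : HasDerivAt (fun y => gcdf (y - μ)) (gpdf (x - μ)) x := by
        exact ((hasDerivAt_gcdf (x - μ)).comp x hsub).congr_deriv (mul_one _)
      have h2 : HasDerivAt (fun y => gpdf (y - μ)) (-(x - μ) * gpdf (x - μ)) x := by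
        exact ((hasDerivAt_gpdf (x - μ)).comp x hsub).congr_deriv (mul_one _)
      have hid : HasDerivAt (fun y : ℝ => y + μ) 1 x := (hasDerivAt_id x).add_const μ
      have := (h1.const_mul (μ ^ 2 + 1)).sub (hid.mul h2)
      exact this.congr_deriv (by ring)
    have hf : Continuous (fun x : ℝ => x ^ 2 * gpdf (x - μ)) := by
      exact (continuous_pow 2).mul (gpdf_continuous.comp (by fun_prop))
    rw [integral_Icc_eq_sub _ _ hle hF hf]
    unfold Z2
    ring
  have hE : ∀ μ : ℝ, E2 μ t = μ + (Z2 μ t)⁻¹ * (gpdf (-t - μ) - gpdf (t - μ)) := by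
    intro μ
    unfold E2
    rw [hNint μ]
    have hz := hZne μ
    field_simp
  have hM : ∀ μ : ℝ, M2 μ t = μ ^ 2 + 1 +
      (Z2 μ t)⁻¹ * ((μ - t) * gpdf (-t - μ) - (μ + t) * gpdf (t - μ)) := by
    intro μ
    unfold M2
    rw [hMint μ]
    have hz := hZne μ
    field_simp
  -- derivative of Z2 and of the numerator A
  have hZderiv : ∀ μ : ℝ, HasDerivAt (fun m => Z2 m t)
      (gpdf (-t - μ) - gpdf (t - μ)) μ := by
    intro μ
    have hs1 : HasDerivAt (fun m : ℝ => t - m) (-1) μ := by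
      simpa using (hasDerivAt_id μ).const_sub t
    have hs2 : HasDerivAt (fun m : ℝ => -t - m) (-1) μ := by
      simpa using (hasDerivAt_id μ).const_sub (-t)
    have h1 : HasDerivAt (fun m => gcdf (t - m)) (gpdf (t - μ) * (-1)) μ :=
      (hasDerivAt_gcdf (t - μ)).comp μ hs1
    have h2 : HasDerivAt (fun m => gcdf (-t - m)) (gpdf (-t - μ) * (-1)) μ :=
      (hasDerivAt_gcdf (-t - μ)).comp μ hs2
    have := h1.sub h2
    exact this.congr_deriv (by ring)
  have hAderiv : ∀ μ : ℝ, HasDerivAt (fun m => gpdf (-t - m) - gpdf (t - m))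
      (-(t + μ) * gpdf (-t - μ) - (t - μ) * gpdf (t - μ)) μ := by
    intro μ
    have hs1 : HasDerivAt (fun m : ℝ => t - m) (-1) μ := by
      simpa using (hasDerivAt_id μ).const_sub t
    have hs2 : HasDerivAt (fun m : ℝ => -t - m) (-1) μ := by
      simpa using (hasDerivAt_id μ).const_sub (-t)
    have h1 : HasDerivAt (fun m => gpdf (t - m)) ((-(t - μ) * gpdf (t - μ)) * (-1)) μ :=
      (hasDerivAt_gpdf (t - μ)).comp μ hs1
    have h2 : HasDerivAt (fun m => gpdf (-t - m)) ((-(-t - μ) * gpdf (-t - μ)) * (-1)) μ :=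
      (hasDerivAt_gpdf (-t - μ)).comp μ hs2
    have := h2.sub h1
    exact this.congr_deriv (by ring)
  -- main derivative statement
  have hderiv : ∀ μ : ℝ, HasDerivAt (fun m : ℝ => E2 m t) (M2 μ t - (E2 μ t) ^ 2) μ := by
    intro μ
    have heq : (fun m : ℝ => E2 m t) =
        fun m => m + (Z2 m t)⁻¹ * (gpdf (-t - m) - gpdf (t - m)) := by
      funext m; exact hE m
    rw [heq]
    have hinv : HasDerivAt (fun m => (Z2 m t)⁻¹)
        (-(gpdf (-t - μ) - gpdf (t - μ)) / (Z2 μ t) ^ 2) μ := (hZderiv μ).inv (hZne μ)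
    have hmul := hinv.mul (hAderiv μ)
    have htot := (hasDerivAt_id μ).add hmul
    refine htot.congr_deriv ?_
    rw [hM μ, hE μ]
    have hz := hZne μ
    field_simp
    ring
  have hvarnn : ∀ μ : ℝ, 0 ≤ M2 μ t - (E2 μ t) ^ 2 := by
    intro μ
    set c := E2 μ t with hc
    have hg : Continuous (fun x : ℝ => gpdf (x - μ)) := gpdf_continuous.comp (by fun_prop)
    have hZint : (∫ x in Set.Icc (-t) t, gpdf (x - μ)) = Z2 μ t := by
      have hF : ∀ x : ℝ, HasDerivAt (fun y => gcdf (y - μ)) (gpdf (x - μ)) x := by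
        intro x
        exact ((hasDerivAt_gcdf (x - μ)).comp x ((hasDerivAt_id x).sub_const μ)).congr_deriv (mul_one _)
      rw [integral_Icc_eq_sub _ _ hle hF hg]
      rfl
    have hint0 : IntegrableOn (fun x : ℝ => gpdf (x - μ)) (Set.Icc (-t) t) :=
      hg.integrableOn_Icc
    have hint1 : IntegrableOn (fun x : ℝ => x * gpdf (x - μ)) (Set.Icc (-t) t) :=
      (continuous_id.mul hg).integrableOn_Icc
    have hint2 : IntegrableOn (fun x : ℝ => x ^ 2 * gpdf (x - μ)) (Set.Icc (-t) t) :=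
      ((continuous_pow 2).mul hg).integrableOn_Icc
    have hsq : (∫ x in Set.Icc (-t) t, (x - c) ^ 2 * gpdf (x - μ)) =
        (∫ x in Set.Icc (-t) t, x ^ 2 * gpdf (x - μ)) -
        2 * c * (∫ x in Set.Icc (-t) t, x * gpdf (x - μ)) +
        c ^ 2 * (∫ x in Set.Icc (-t) t, gpdf (x - μ)) := by
      have : (fun x : ℝ => (x - c) ^ 2 * gpdf (x - μ)) =
          fun x => x ^ 2 * gpdf (x - μ) - (2 * c) * (x * gpdf (x - μ)) +
            (c ^ 2) * gpdf (x - μ) := by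
        funext x; ring
      have hsub : IntegrableOn
          (fun x : ℝ => x ^ 2 * gpdf (x - μ) - 2 * c * (x * gpdf (x - μ)))
          (Set.Icc (-t) t) := hint2.sub (hint1.const_mul (2 * c))
      have hcm : IntegrableOn (fun x : ℝ => c ^ 2 * gpdf (x - μ)) (Set.Icc (-t) t) :=
        hint0.const_mul (c ^ 2)
      have hcm1 : IntegrableOn (fun x : ℝ => 2 * c * (x * gpdf (x - μ))) (Set.Icc (-t) t) :=
        hint1.const_mul (2 * c)
      rw [this, MeasureTheory.integral_add hsub hcm,
        MeasureTheory.integral_sub hint2 hcm1,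
        MeasureTheory.integral_const_mul, MeasureTheory.integral_const_mul]
    have hvar : M2 μ t - c ^ 2 =
        (Z2 μ t)⁻¹ * ∫ x in Set.Icc (-t) t, (x - c) ^ 2 * gpdf (x - μ) := by
      rw [hsq, hZint]
      unfold M2
      rw [hc]
      unfold E2
      have hz := hZne μ
      field_simp
      ring
    rw [hvar]
    have hnn : 0 ≤ ∫ x in Set.Icc (-t) t, (x - c) ^ 2 * gpdf (x - μ) := by
      apply MeasureTheory.setIntegral_nonneg measurableSet_Icc
      intro x _
      exact mul_nonneg (sq_nonneg _) (gpdf_pos _).le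
    exact mul_nonneg (inv_nonneg.mpr (hZpos μ).le) hnn
  refine ⟨hderiv, hvarnn, ?_⟩
  apply monotone_of_deriv_nonneg
  · exact fun μ => (hderiv μ).differentiableAt
  · intro μ
    rw [(hderiv μ).deriv]
    exact hvarnn μ
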